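/- For real symmetric positive definite d×d matrices A and B, the misalignment M(A, B) equals 0 if and only if B is aligned with A. -/

import Mathlib

open Matrix

section helpers
variable {d : ℕ}

lemma dot_self_nonneg (v : Fin d → ℝ) : 0 ≤ v ⬝ᵥ v :=
  Finset.sum_nonneg fun i _ => mul_self_nonneg _

lemma dot_sq_le (u v : Fin d → ℝ) : (u ⬝ᵥ v) ^ 2 ≤ (u ⬝ᵥ u) * (v ⬝ᵥ v) := by
  have := Finset.sum_mul_sq_le_sq_mul_sq Finset.univ u v
  simpa [dotProduct, sq] using this

lemma psd_quad (M : Matrix (Fin d) (Fin d) ℝ) (hM : M.PosSemidef) (x : Fin d → ℝ) :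
    0 ≤ x ⬝ᵥ M *ᵥ x := by
  simpa using hM.dotProduct_mulVec_nonneg x

lemma herm_eq_transpose {M : Matrix (Fin d) (Fin d) ℝ} (hM : M.IsHermitian) : Mᵀ = M := hM

lemma symm_dot_mulVec {M : Matrix (Fin d) (Fin d) ℝ} (hM : M.IsHermitian) (u v : Fin d → ℝ) :
    u ⬝ᵥ M *ᵥ v = (M *ᵥ u) ⬝ᵥ v := by
  rw [Matrix.dotProduct_mulVec, ← Matrix.mulVec_transpose, herm_eq_transpose hM]

end helpers

section helpers2
variable {d : ℕ}

lemma trace_RR (R : Matrix (Fin d) (Fin d) ℝ) (hR : R.IsHermitian) :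
    (R * R).trace = ∑ i, ∑ j, R i j ^ 2 := by
  simp only [Matrix.trace, Matrix.diag, Matrix.mul_apply]
  refine Finset.sum_congr rfl fun i _ => Finset.sum_congr rfl fun j _ => ?_
  have : R j i = R i j := by
    conv_lhs => rw [← herm_eq_transpose hR, Matrix.transpose_apply]
  rw [this, sq]

open scoped MatrixOrder in
lemma quad_le_trace {M : Matrix (Fin d) (Fin d) ℝ} (hM : M.PosSemidef) (x : Fin d → ℝ) :
    x ⬝ᵥ M *ᵥ x ≤ M.trace * (x ⬝ᵥ x) := by
  set R := CFC.sqrt M with hRdef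
  have hRh : R.IsHermitian := (CFC.sqrt_nonneg M).posSemidef.isHermitian
  have hRR : R * R = M := CFC.sqrt_mul_sqrt_self M hM.nonneg
  have h1 : x ⬝ᵥ M *ᵥ x = (R *ᵥ x) ⬝ᵥ (R *ᵥ x) := by
    rw [← hRR, ← Matrix.mulVec_mulVec, symm_dot_mulVec hRh]
  have h2 : ∀ i, (R *ᵥ x) i ^ 2 ≤ (∑ j, R i j ^ 2) * (x ⬝ᵥ x) := by
    intro i
    have := Finset.sum_mul_sq_le_sq_mul_sq Finset.univ (fun j => R i j) x
    simpa [Matrix.mulVec, dotProduct, sq] using this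
  calc x ⬝ᵥ M *ᵥ x = ∑ i, (R *ᵥ x) i ^ 2 := by
        rw [h1]; simp [dotProduct, sq]
    _ ≤ ∑ i, (∑ j, R i j ^ 2) * (x ⬝ᵥ x) := Finset.sum_le_sum fun i _ => h2 i
    _ = M.trace * (x ⬝ᵥ x) := by rw [← Finset.sum_mul, ← trace_RR R hRh, hRR]

lemma trace_psd_nonneg {M : Matrix (Fin d) (Fin d) ℝ} (hM : M.PosSemidef) :
    0 ≤ M.trace := by
  refine Finset.sum_nonneg fun i _ => ?_
  have := hM.dotProduct_mulVec_nonneg (Pi.single i 1)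
  simpa [dotProduct_single, Matrix.mulVec_single] using this

open scoped MatrixOrder in
lemma trace_mul_psd_nonneg {P Q : Matrix (Fin d) (Fin d) ℝ} (hP : P.PosSemidef)
    (hQ : Q.PosSemidef) : 0 ≤ (P * Q).trace := by
  set R := CFC.sqrt P with hRdef
  have hRh : R.IsHermitian := (CFC.sqrt_nonneg P).posSemidef.isHermitian
  have hRR : R * R = P := CFC.sqrt_mul_sqrt_self P hP.nonneg
  have h1 : (P * Q).trace = (Rᴴ * Q * R).trace := by
    rw [hRh.eq, ← hRR]
    rw [Matrix.mul_assoc, Matrix.trace_mul_comm]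
  rw [h1]
  exact trace_psd_nonneg (hQ.conjTranspose_mul_mul_same R)

lemma trace_mul_ge {P Q : Matrix (Fin d) (Fin d) ℝ} (c : ℝ)
    (hP : (P - c • (1 : Matrix (Fin d) (Fin d) ℝ)).PosSemidef) (hQ : Q.PosSemidef) :
    c * Q.trace ≤ (P * Q).trace := by
  have h := trace_mul_psd_nonneg hP hQ
  rw [Matrix.sub_mul, Matrix.smul_mul, Matrix.one_mul, Matrix.trace_sub, Matrix.trace_smul,
    sub_nonneg, smul_eq_mul] at h
  exact h

end helpers2

section helpers3
variable {d : ℕ}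

lemma pd_mul_inv {S : Matrix (Fin d) (Fin d) ℝ} (hS : S.PosDef) : S * S⁻¹ = 1 :=
  Matrix.mul_nonsing_inv S (Matrix.isUnit_iff_isUnit_det S |>.mp hS.isUnit)

lemma pd_inv_mul {S : Matrix (Fin d) (Fin d) ℝ} (hS : S.PosDef) : S⁻¹ * S = 1 :=
  Matrix.nonsing_inv_mul S (Matrix.isUnit_iff_isUnit_det S |>.mp hS.isUnit)

lemma pd_trace_pos {S : Matrix (Fin d) (Fin d) ℝ} (hS : S.PosDef) (hd : 0 < d) :
    0 < S.trace := by
  have hne : (Finset.univ : Finset (Fin d)).Nonempty := by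
    simpa [Finset.univ_nonempty_iff] using Fin.pos_iff_nonempty.mp hd
  refine Finset.sum_pos (fun i _ => ?_) hne
  have hnz : (Pi.single i 1 : Fin d → ℝ) ≠ 0 := by
    intro h; have := congrFun h i; simp at this
  have := hS.dotProduct_mulVec_pos hnz
  simpa [dotProduct_single, Matrix.mulVec_single] using this

open scoped MatrixOrder in
/-- Cauchy–Schwarz in the `S`-inner product: `(x⬝x)² ≤ (xᵀSx)(xᵀS⁻¹x)`. -/
lemma cs_inv {S : Matrix (Fin d) (Fin d) ℝ} (hS : S.PosDef) (x : Fin d → ℝ) :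
    (x ⬝ᵥ x) ^ 2 ≤ (x ⬝ᵥ S *ᵥ x) * (x ⬝ᵥ S⁻¹ *ᵥ x) := by
  set y := S⁻¹ *ᵥ x with hy
  have hSy : S *ᵥ y = x := by
    rw [hy, Matrix.mulVec_mulVec, pd_mul_inv hS, Matrix.one_mulVec]
  -- CS for the PSD bilinear form of S, via sqrt
  set R := CFC.sqrt S with hR
  have hRh : R.IsHermitian := (CFC.sqrt_nonneg S).posSemidef.isHermitian
  have hRR : R * R = S := CFC.sqrt_mul_sqrt_self S hS.posSemidef.nonneg
  have key : (x ⬝ᵥ S *ᵥ y) ^ 2 ≤ (x ⬝ᵥ S *ᵥ x) * (y ⬝ᵥ S *ᵥ y) := by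
    have e : ∀ u v : Fin d → ℝ, u ⬝ᵥ S *ᵥ v = (R *ᵥ u) ⬝ᵥ (R *ᵥ v) := by
      intro u v
      rw [← hRR, ← Matrix.mulVec_mulVec, symm_dot_mulVec hRh]
    rw [e x y, e x x, e y y]
    exact dot_sq_le _ _
  have hyy : y ⬝ᵥ S *ᵥ y = x ⬝ᵥ S⁻¹ *ᵥ x := by
    rw [hSy, hy, dotProduct_comm]
  rw [hyy] at key
  rw [hSy] at key
  exact key

/-- For a PD matrix `S`, `S⁻¹ ≥ (tr S)⁻¹ • 1` as quadratic forms. -/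
lemma inv_psd_lb {S : Matrix (Fin d) (Fin d) ℝ} (hS : S.PosDef) :
    (S⁻¹ - (S.trace)⁻¹ • (1 : Matrix (Fin d) (Fin d) ℝ)).PosSemidef := by
  have h1 : ((S.trace)⁻¹ • (1 : Matrix (Fin d) (Fin d) ℝ)).IsHermitian := by
    simp [Matrix.IsHermitian]
  refine Matrix.PosSemidef.of_dotProduct_mulVec_nonneg (hS.inv.isHermitian.sub h1) fun x => ?_
  have hform : star x ⬝ᵥ (S⁻¹ - (S.trace)⁻¹ • (1 : Matrix (Fin d) (Fin d) ℝ)) *ᵥ x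
      = x ⬝ᵥ S⁻¹ *ᵥ x - (S.trace)⁻¹ * (x ⬝ᵥ x) := by
    rw [star_trivial, Matrix.sub_mulVec, dotProduct_sub, Matrix.smul_mulVec,
      Matrix.one_mulVec, dotProduct_smul, smul_eq_mul]
  rw [hform, sub_nonneg]
  by_cases hx : x = 0
  · simp [hx]
  · have hd : 0 < d := by
      rcases Function.ne_iff.mp hx with ⟨i, _⟩
      exact i.pos
    have htr : 0 < S.trace := pd_trace_pos hS hd
    have h1 : (x ⬝ᵥ x) ^ 2 ≤ (x ⬝ᵥ S *ᵥ x) * (x ⬝ᵥ S⁻¹ *ᵥ x) := cs_inv hS x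
    have h2 : x ⬝ᵥ S *ᵥ x ≤ S.trace * (x ⬝ᵥ x) := quad_le_trace hS.posSemidef x
    have hxx : 0 < x ⬝ᵥ x := by
      rcases (dot_self_nonneg x).eq_or_lt' with h | h
      · exact absurd (dotProduct_self_eq_zero.mp h) hx
      · exact h
    have hinvq : 0 ≤ x ⬝ᵥ S⁻¹ *ᵥ x := psd_quad _ hS.inv.posSemidef x
    rw [inv_mul_le_iff₀ htr]
    nlinarith [mul_le_mul_of_nonneg_right h2 hinvq]
end helpers3

section value
variable {d : ℕ} {B S : Matrix (Fin d) (Fin d) ℝ}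

lemma central_identity (hB : B.PosDef) (hS : S.PosDef) :
    S⁻¹ * ((B - S) * B⁻¹ * (B - S)) = S⁻¹ * B + B⁻¹ * S - (1 + 1) := by
  have hB1 : B * B⁻¹ = 1 := pd_mul_inv hB
  have hB2 : B⁻¹ * B = 1 := pd_inv_mul hB
  have hS2 : S⁻¹ * S = 1 := pd_inv_mul hS
  have e : S⁻¹ * ((B - S) * B⁻¹ * (B - S))
      = S⁻¹ * B * (B⁻¹ * B) - S⁻¹ * (B * B⁻¹) * S - S⁻¹ * S * (B⁻¹ * B)
        + S⁻¹ * S * (B⁻¹ * S) := by noncomm_ring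
  rw [e, hB1, hB2, hS2]
  have e2 : S⁻¹ * (1 : Matrix (Fin d) (Fin d) ℝ) * S = 1 := by
    rw [Matrix.mul_one, hS2]
  rw [e2]
  noncomm_ring

lemma value_eq (hB : B.PosDef) (hS : S.PosDef) :
    (1 / 2) * (S⁻¹ * B + B⁻¹ * S).trace - (d : ℝ)
      = (1 / 2) * (S⁻¹ * ((B - S) * B⁻¹ * (B - S))).trace := by
  rw [central_identity hB hS]
  simp only [Matrix.trace_sub, Matrix.trace_add, Matrix.trace_one, Fintype.card_fin]
  ring

lemma Q_posSemidef (hB : B.PosDef) (hS : S.PosDef) :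
    ((B - S) * B⁻¹ * (B - S)).PosSemidef := by
  have hD : (B - S).IsHermitian := hB.isHermitian.sub hS.isHermitian
  have := hB.inv.posSemidef.conjTranspose_mul_mul_same (B - S)
  rwa [hD.eq] at this

lemma value_nonneg (hB : B.PosDef) (hS : S.PosDef) :
    0 ≤ (1 / 2) * (S⁻¹ * B + B⁻¹ * S).trace - (d : ℝ) := by
  rw [value_eq hB hS]
  have := trace_mul_psd_nonneg hS.inv.posSemidef (Q_posSemidef hB hS)
  linarith

lemma trace_S_bound (hd : 0 < d) (hB : B.PosDef) (hS : S.PosDef) :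
    S.trace ≤ 2 * B.trace * (((1 / 2) * (S⁻¹ * B + B⁻¹ * S).trace - (d : ℝ)) + d) := by
  have htrB : 0 < B.trace := pd_trace_pos hB hd
  have h1 : 0 ≤ (S⁻¹ * B).trace :=
    trace_mul_psd_nonneg hS.inv.posSemidef hB.posSemidef
  have h2 : (B.trace)⁻¹ * S.trace ≤ (B⁻¹ * S).trace :=
    trace_mul_ge _ (inv_psd_lb hB) hS.posSemidef
  have h3 : B.trace * (B.trace)⁻¹ = 1 := mul_inv_cancel₀ htrB.ne'
  have h4 : (S⁻¹ * B + B⁻¹ * S).trace = (S⁻¹ * B).trace + (B⁻¹ * S).trace :=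
    Matrix.trace_add _ _
  have h5 : S.trace ≤ B.trace * (B⁻¹ * S).trace := by
    have := mul_le_mul_of_nonneg_left h2 htrB.le
    calc S.trace = B.trace * B.trace⁻¹ * S.trace := by rw [h3]; ring
      _ = B.trace * (B.trace⁻¹ * S.trace) := by ring
      _ ≤ B.trace * (B⁻¹ * S).trace := this
  have h6 : 0 ≤ B.trace * (S⁻¹ * B).trace := mul_nonneg htrB.le h1
  rw [h4]
  have expand : 2 * B.trace * (1 / 2 * ((S⁻¹ * B).trace + (B⁻¹ * S).trace) - (d : ℝ) + d)
      = B.trace * (S⁻¹ * B).trace + B.trace * (B⁻¹ * S).trace := by ring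
  linarith

lemma Dz_bound (hd : 0 < d) (hB : B.PosDef) (hS : S.PosDef) (z : Fin d → ℝ) :
    ((B - S) *ᵥ z) ⬝ᵥ ((B - S) *ᵥ z)
      ≤ 2 * B.trace * S.trace * ((1 / 2) * (S⁻¹ * B + B⁻¹ * S).trace - (d : ℝ)) * (z ⬝ᵥ z) := by
  set D := B - S with hDdef
  have hD : D.IsHermitian := hB.isHermitian.sub hS.isHermitian
  set Q := D * B⁻¹ * D with hQdef
  have hQ : Q.PosSemidef := Q_posSemidef hB hS
  have htrB : 0 < B.trace := pd_trace_pos hB hd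
  have htrS : 0 < S.trace := pd_trace_pos hS hd
  have hDD : (D * D).PosSemidef := by
    have := Matrix.posSemidef_conjTranspose_mul_self D
    rwa [hD.eq] at this
  -- step 1
  have e1 : (D *ᵥ z) ⬝ᵥ (D *ᵥ z) = z ⬝ᵥ (D * D) *ᵥ z := by
    rw [← Matrix.mulVec_mulVec, symm_dot_mulVec hD]
    exact dotProduct_comm _ _
  -- step 2
  have e2 : z ⬝ᵥ (D * D) *ᵥ z ≤ (D * D).trace * (z ⬝ᵥ z) := quad_le_trace hDD z
  -- step 3
  have e3 : (B.trace)⁻¹ * (D * D).trace ≤ (B⁻¹ * (D * D)).trace :=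
    trace_mul_ge _ (inv_psd_lb hB) hDD
  -- step 4
  have e4 : (B⁻¹ * (D * D)).trace = Q.trace := by
    rw [hQdef, Matrix.trace_mul_comm B⁻¹ (D * D), Matrix.mul_assoc D D B⁻¹,
      Matrix.trace_mul_comm D (D * B⁻¹)]
  -- step 5
  have e5 : (S.trace)⁻¹ * Q.trace ≤ (S⁻¹ * Q).trace :=
    trace_mul_ge _ (inv_psd_lb hS) hQ
  -- step 6
  have e6 : (S⁻¹ * Q).trace = 2 * ((1 / 2) * (S⁻¹ * B + B⁻¹ * S).trace - (d : ℝ)) := by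
    have := value_eq hB hS
    linarith
  have hDDtr : 0 ≤ (D * D).trace := trace_psd_nonneg hDD
  have hQtr : 0 ≤ Q.trace := trace_psd_nonneg hQ
  have hzz : 0 ≤ z ⬝ᵥ z := dot_self_nonneg z
  have hBB : B.trace * (B.trace)⁻¹ = 1 := mul_inv_cancel₀ htrB.ne'
  have hSS : S.trace * (S.trace)⁻¹ = 1 := mul_inv_cancel₀ htrS.ne'
  -- combine
  have c3 : (D * D).trace ≤ B.trace * (B⁻¹ * (D * D)).trace := by
    nlinarith [mul_le_mul_of_nonneg_left e3 htrB.le]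
  have c5 : Q.trace ≤ S.trace * (S⁻¹ * Q).trace := by
    nlinarith [mul_le_mul_of_nonneg_left e5 htrS.le]
  rw [e1]
  calc z ⬝ᵥ (D * D) *ᵥ z ≤ (D * D).trace * (z ⬝ᵥ z) := e2
    _ ≤ (B.trace * (B⁻¹ * (D * D)).trace) * (z ⬝ᵥ z) := by
        exact mul_le_mul_of_nonneg_right c3 hzz
    _ = (B.trace * Q.trace) * (z ⬝ᵥ z) := by rw [e4]
    _ ≤ (B.trace * (S.trace * (S⁻¹ * Q).trace)) * (z ⬝ᵥ z) := by
        have : B.trace * Q.trace ≤ B.trace * (S.trace * (S⁻¹ * Q).trace) :=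
          mul_le_mul_of_nonneg_left c5 htrB.le
        exact mul_le_mul_of_nonneg_right this hzz
    _ = 2 * B.trace * S.trace * ((1 / 2) * (S⁻¹ * B + B⁻¹ * S).trace - (d : ℝ)) * (z ⬝ᵥ z) := by
        rw [e6]; ring

lemma dot_add_le (u v : Fin d → ℝ) :
    (u + v) ⬝ᵥ (u + v) ≤ 2 * (u ⬝ᵥ u) + 2 * (v ⬝ᵥ v) := by
  have h := dot_self_nonneg (u - v)
  have e1 : (u - v) ⬝ᵥ (u - v) = u ⬝ᵥ u - 2 * (u ⬝ᵥ v) + v ⬝ᵥ v := by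
    simp only [sub_dotProduct, dotProduct_sub]
    rw [dotProduct_comm v u]; ring
  have e2 : (u + v) ⬝ᵥ (u + v) = u ⬝ᵥ u + 2 * (u ⬝ᵥ v) + v ⬝ᵥ v := by
    simp only [add_dotProduct, dotProduct_add]
    rw [dotProduct_comm v u]; ring
  linarith

end value

/-- Eigenspace of a `d × d` real matrix `A` for the (potential) eigenvalue `μ`. -/
noncomputable def eigSp {d : ℕ} (A : Matrix (Fin d) (Fin d) ℝ) (μ : ℝ) :
    Submodule ℝ (Fin d → ℝ) :=
  Module.End.eigenspace A.mulVecLin μ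

/-- `A` is aligned with `B` if every eigenspace of `B` is contained in an eigenspace of `A`. -/
def IsAligned {d : ℕ} (A B : Matrix (Fin d) (Fin d) ℝ) : Prop :=
  ∀ μ : ℝ, ∃ ν : ℝ, eigSp B μ ≤ eigSp A ν

/-- The misalignment `M(A, B)`: the infimum, over symmetric positive definite matrices `S`
aligned with `A`, of `(1/2) · tr(S⁻¹ B + B⁻¹ S) − d`. -/
noncomputable def misalignment {d : ℕ} (A B : Matrix (Fin d) (Fin d) ℝ) : ℝ :=
  sInf {m : ℝ | ∃ S : Matrix (Fin d) (Fin d) ℝ,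
    S.PosDef ∧ IsAligned S A ∧ m = (1 / 2) * (S⁻¹ * B + B⁻¹ * S).trace - d}

lemma isAligned_one {d : ℕ} (A : Matrix (Fin d) (Fin d) ℝ) : IsAligned 1 A := by
  intro μ
  refine ⟨1, fun x _ => ?_⟩
  simp [eigSp, Module.End.mem_eigenspace_iff, Matrix.mulVecLin_apply, Matrix.one_mulVec]

set_option maxHeartbeats 1600000 in
/-- The misalignment `M(A, B)` vanishes if and only if `B` is aligned
with `A`. -/
theorem misalignment_eq_zero_iff {d : ℕ} (A B : Matrix (Fin d) (Fin d) ℝ)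
    (hA : A.PosDef) (hB : B.PosDef) :
    misalignment A B = 0 ↔ IsAligned B A := by
  set sset : Set ℝ := {m : ℝ | ∃ S : Matrix (Fin d) (Fin d) ℝ,
    S.PosDef ∧ IsAligned S A ∧ m = (1 / 2) * (S⁻¹ * B + B⁻¹ * S).trace - d} with hsset
  have hmis : misalignment A B = sInf sset := rfl
  have hlb : ∀ m ∈ sset, (0:ℝ) ≤ m := by
    rintro m ⟨S, hS, -, rfl⟩
    exact value_nonneg hB hS
  have hne : sset.Nonempty := ⟨_, 1, Matrix.PosDef.one, isAligned_one A, rfl⟩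
  have hbdd : BddBelow sset := ⟨0, hlb⟩
  constructor
  · intro h μ
    by_cases hbot : eigSp A μ = ⊥
    · exact ⟨0, by rw [hbot]; exact bot_le⟩
    obtain ⟨x₀, hx₀E, hx₀⟩ := (Submodule.ne_bot_iff _).mp hbot
    have hd : 0 < d := by
      rcases Function.ne_iff.mp hx₀ with ⟨i, -⟩; exact i.pos
    have hx₀x₀ : 0 < x₀ ⬝ᵥ x₀ := by
      rcases (dot_self_nonneg x₀).eq_or_lt' with hh | hh
      · exact absurd (dotProduct_self_eq_zero.mp hh) hx₀
      · exact hh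
    set ν : ℝ := (x₀ ⬝ᵥ B *ᵥ x₀) / (x₀ ⬝ᵥ x₀) with hν
    refine ⟨ν, fun z hz => ?_⟩
    rw [eigSp, Module.End.mem_eigenspace_iff, Matrix.mulVecLin_apply]
    set w : Fin d → ℝ := B *ᵥ z - ν • z with hw
    have hczz := dot_self_nonneg z
    have main : ∀ δ : ℝ, 0 < δ → w ⬝ᵥ w ≤ δ := by
      intro δ hδ
      have hc : 0 < B.trace := pd_trace_pos hB hd
      set C : ℝ := 4 * B.trace ^ 2 * (1 + d) with hC
      have hCpos : 0 < C := by
        have : (0:ℝ) < 1 + d := by positivity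
        positivity
      set K : ℝ := 4 * C * (z ⬝ᵥ z) + 1 with hK
      have hKpos : 0 < K := by nlinarith [mul_nonneg hCpos.le hczz]
      set ε : ℝ := min 1 (δ / K) with hε
      have hεpos : 0 < ε := lt_min one_pos (div_pos hδ hKpos)
      have hsinf : sInf sset < ε := by rw [← hmis, h]; exact hεpos
      obtain ⟨m, hm, hmlt⟩ := exists_lt_of_csInf_lt hne hsinf
      obtain ⟨S, hS, hSA, hmeq⟩ := hm
      have hm0 : 0 ≤ m := hmeq ▸ value_nonneg hB hS
      obtain ⟨νS, hνS⟩ := hSA μ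
      have hSz : S *ᵥ z = νS • z := by
        have := hνS hz
        rwa [eigSp, Module.End.mem_eigenspace_iff, Matrix.mulVecLin_apply] at this
      have hSx₀ : S *ᵥ x₀ = νS • x₀ := by
        have := hνS hx₀E
        rwa [eigSp, Module.End.mem_eigenspace_iff, Matrix.mulVecLin_apply] at this
      have htrS : S.trace ≤ 2 * B.trace * (m + d) := by
        have h0 := trace_S_bound hd hB hS
        rwa [← hmeq] at h0
      have hm1 : m ≤ 1 := le_trans hmlt.le (min_le_left _ _)
      have htrS' : S.trace ≤ 2 * B.trace * (1 + d) := by nlinarith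
      have hDbound : ∀ y : Fin d → ℝ,
          ((B - S) *ᵥ y) ⬝ᵥ ((B - S) *ᵥ y) ≤ C * m * (y ⬝ᵥ y) := by
        intro y
        have h0 := Dz_bound hd hB hS y
        rw [← hmeq] at h0
        refine le_trans h0 ?_
        have hyy := dot_self_nonneg y
        have hkey : 2 * B.trace * S.trace * m ≤ C * m := by
          have hmul : 2 * B.trace * m * S.trace ≤ 2 * B.trace * m * (2 * B.trace * (1 + d)) :=
            mul_le_mul_of_nonneg_left htrS' (by positivity)
          rw [hC]; nlinarith [hmul]
        exact mul_le_mul_of_nonneg_right hkey hyy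
      have hDz := hDbound z
      have hDx₀ := hDbound x₀
      have hdiff : (ν - νS) * (x₀ ⬝ᵥ x₀) = x₀ ⬝ᵥ (B - S) *ᵥ x₀ := by
        have hBx : x₀ ⬝ᵥ B *ᵥ x₀ = ν * (x₀ ⬝ᵥ x₀) := by
          rw [hν]; field_simp
        rw [Matrix.sub_mulVec, dotProduct_sub, hBx, hSx₀, dotProduct_smul, smul_eq_mul]
        ring
      have hcs : (x₀ ⬝ᵥ (B - S) *ᵥ x₀) ^ 2
          ≤ (x₀ ⬝ᵥ x₀) * (((B - S) *ᵥ x₀) ⬝ᵥ ((B - S) *ᵥ x₀)) := dot_sq_le _ _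
      have hνdiff : (ν - νS) ^ 2 ≤ C * m := by
        have h1 : (ν - νS) ^ 2 * ((x₀ ⬝ᵥ x₀) * (x₀ ⬝ᵥ x₀))
            = (x₀ ⬝ᵥ (B - S) *ᵥ x₀) ^ 2 := by rw [← hdiff]; ring
        have h2 : (x₀ ⬝ᵥ (B - S) *ᵥ x₀) ^ 2
            ≤ (x₀ ⬝ᵥ x₀) * (C * m * (x₀ ⬝ᵥ x₀)) :=
          le_trans hcs (mul_le_mul_of_nonneg_left hDx₀ hx₀x₀.le)
        have h3 : (ν - νS) ^ 2 * ((x₀ ⬝ᵥ x₀) * (x₀ ⬝ᵥ x₀))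
            ≤ (C * m) * ((x₀ ⬝ᵥ x₀) * (x₀ ⬝ᵥ x₀)) := by
          calc (ν - νS) ^ 2 * ((x₀ ⬝ᵥ x₀) * (x₀ ⬝ᵥ x₀))
              = (x₀ ⬝ᵥ (B - S) *ᵥ x₀) ^ 2 := h1
            _ ≤ (x₀ ⬝ᵥ x₀) * (C * m * (x₀ ⬝ᵥ x₀)) := h2
            _ = (C * m) * ((x₀ ⬝ᵥ x₀) * (x₀ ⬝ᵥ x₀)) := by ring
        exact le_of_mul_le_mul_right h3 (mul_pos hx₀x₀ hx₀x₀)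
      have hw_eq : w = (B - S) *ᵥ z + (νS - ν) • z := by
        rw [hw, Matrix.sub_mulVec, hSz, sub_smul]
        abel
      have hbound := dot_add_le ((B - S) *ᵥ z) ((νS - ν) • z)
      have hsmul : ((νS - ν) • z) ⬝ᵥ ((νS - ν) • z) = (νS - ν) ^ 2 * (z ⬝ᵥ z) := by
        rw [smul_dotProduct, dotProduct_smul, smul_eq_mul, smul_eq_mul]; ring
      have hsq : (νS - ν) ^ 2 = (ν - νS) ^ 2 := by ring
      have hfin : w ⬝ᵥ w ≤ 4 * (C * m) * (z ⬝ᵥ z) := by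
        rw [hw_eq]
        have hu : ((B - S) *ᵥ z) ⬝ᵥ ((B - S) *ᵥ z) ≤ C * m * (z ⬝ᵥ z) := hDz
        have hv : ((νS - ν) • z) ⬝ᵥ ((νS - ν) • z) ≤ C * m * (z ⬝ᵥ z) := by
          rw [hsmul, hsq]
          exact mul_le_mul_of_nonneg_right hνdiff hczz
        linarith
      -- final numeric step
      have hεK : ε ≤ δ / K := min_le_right _ _
      have hKε : K * ε ≤ δ := by
        have := mul_le_mul_of_nonneg_left hεK hKpos.le
        rwa [mul_div_cancel₀ _ hKpos.ne'] at this
      have hCm : 4 * (C * m) * (z ⬝ᵥ z) ≤ (K - 1) * ε := by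
        have h4 : (0:ℝ) ≤ 4 * C * (z ⬝ᵥ z) := by positivity
        have : 4 * C * (z ⬝ᵥ z) * m ≤ 4 * C * (z ⬝ᵥ z) * ε :=
          mul_le_mul_of_nonneg_left hmlt.le h4
        rw [hK]; linarith
      have : (K - 1) * ε ≤ K * ε := by nlinarith [hεpos.le]
      linarith
    have hww : w ⬝ᵥ w = 0 := by
      by_contra hne0
      have hpos : 0 < w ⬝ᵥ w := (dot_self_nonneg w).lt_of_ne (Ne.symm hne0)
      have := main ((w ⬝ᵥ w) / 2) (by linarith)
      linarith
    have hw0 := dotProduct_self_eq_zero.mp hww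
    rw [hw] at hw0
    exact sub_eq_zero.mp hw0
  · intro hAl
    rw [hmis]
    apply le_antisymm
    · apply csInf_le hbdd
      refine ⟨B, hB, hAl, ?_⟩
      rw [pd_inv_mul hB]
      simp only [Matrix.trace_add, Matrix.trace_one, Fintype.card_fin]
      push_cast
      ring
    · exact le_csInf hne hlb
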